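/- Let U and V be real Hilbert spaces, V̂ ⊆ V a closed subspace, and U_h ⊆ U a finite-dimensional subspace. Let b : U × V → ℝ be a continuous bilinear form satisfying the discrete inf-sup condition: there is β_h > 0 with sup_{v ∈ V̂, v ≠ 0} b(w_h, v)/‖v‖_V ≥ β_h ‖w_h‖_U for all w_h ∈ U_h. Let a : V̂ × V̂ → ℝ be a symmetric continuous bilinear form which is an equivalent inner product on V̂, i.e. C₁‖v‖_V ≤ √(a(v,v)) ≤ C₂‖v‖_V for all v ∈ V̂, with constants C₁, C₂ > 0. Then any solution (r, u_h) ∈ V̂ × U_h of the mixed system with datum f (a continuous linear functional on V̂) satisfies the improved a priori bound ‖u_h‖_U ≤ (C₂/C₁)(1/β_h)‖f‖_{V̂*}. -/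

import Mathlib

open Topology Filter

set_option maxHeartbeats 1000000 in
set_option synthInstance.maxHeartbeats 400000 in
/-- Improved a priori bound: if `a` is a symmetric continuous
bilinear form which is an equivalent inner product on `V̂` (with constants
`C₁, C₂ > 0`) and `b` satisfies the discrete inf-sup condition with constant
`β_h > 0`, then any solution `(r, u_h)` of the mixed system with datum `f`
satisfies `‖u_h‖_U ≤ (C₂/C₁)(1/β_h)‖f‖`. -/
theorem mixed_system_improved_apriori_bound
    {U V : Type*}
    [NormedAddCommGroup U] [InnerProductSpace ℝ U] [CompleteSpace U]
    [NormedAddCommGroup V] [InnerProductSpace ℝ V] [CompleteSpace V]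
    (Vhat : Submodule ℝ V) (hVc : IsClosed (Vhat : Set V))
    (Uh : Submodule ℝ U) (hUfd : FiniteDimensional ℝ Uh)
    (a : Vhat →L[ℝ] Vhat →L[ℝ] ℝ) (b : U →L[ℝ] V →L[ℝ] ℝ)
    (hsymm : ∀ v₁ v₂ : Vhat, a v₁ v₂ = a v₂ v₁)
    (C₁ C₂ : ℝ) (hC₁ : 0 < C₁) (hC₂ : 0 < C₂)
    (hequiv : ∀ v : Vhat,
      C₁ * ‖v‖ ≤ Real.sqrt (a v v) ∧ Real.sqrt (a v v) ≤ C₂ * ‖v‖)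
    (βh : ℝ) (hβh : 0 < βh)
    (hinfsup_b : ∀ wh ∈ Uh,
      βh * ‖wh‖ ≤ ⨆ v : {v : Vhat // v ≠ 0}, b wh ((v.1 : V)) / ‖v.1‖) :
    ∀ (f : Vhat →L[ℝ] ℝ) (r : Vhat) (uh : Uh),
      (∀ v : Vhat, a r v + b (uh : U) (v : V) = f v) →
      (∀ wh ∈ Uh, b wh ((r : V)) = 0) →
      ‖(uh : U)‖ ≤ (C₂ / C₁) * (1 / βh) * ‖f‖ := by
  intro f r uh hsol horth
  -- a is nonnegative on the diagonal
  have hnn : ∀ w : Vhat, 0 ≤ a w w := by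
    intro w
    by_contra h
    push_neg at h
    have h0 : Real.sqrt (a w w) = 0 := Real.sqrt_eq_zero_of_nonpos h.le
    have h1 := (hequiv w).1
    rw [h0] at h1
    have hw : ‖w‖ ≤ 0 := by nlinarith [norm_nonneg w]
    have : w = 0 := norm_eq_zero.mp (le_antisymm hw (norm_nonneg _))
    rw [this] at h
    simp at h
  -- key bound
  have key : ∀ v : Vhat, b (uh : U) (v : V) ≤ (C₂ / C₁) * ‖f‖ * ‖v‖ := by
    intro v
    have hbr : b (uh : U) ((r : V)) = 0 := horth (uh : U) uh.2
    by_cases hrr : a r r = 0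
    · -- then r = 0
      have hr0 : r = 0 := by
        have h1 := (hequiv r).1
        rw [hrr, Real.sqrt_zero] at h1
        have hw : ‖r‖ ≤ 0 := by nlinarith [norm_nonneg r]
        exact norm_eq_zero.mp (le_antisymm hw (norm_nonneg _))
      have hbv : b (uh : U) (v : V) = f v := by
        have := hsol v
        rw [hr0] at this
        simpa using this
      rw [hbv]
      by_cases hv : v = 0
      · rw [hv]
        simp
      · have hC12 : C₁ ≤ C₂ := by
          have h1 := (hequiv v).1
          have h2 := (hequiv v).2
          have hvpos : 0 < ‖v‖ := norm_pos_iff.mpr hv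
          nlinarith
        have h1le : (1:ℝ) ≤ C₂ / C₁ := (one_le_div hC₁).mpr hC12
        calc f v ≤ |f v| := le_abs_self _
          _ = ‖f v‖ := rfl
          _ ≤ ‖f‖ * ‖v‖ := f.le_opNorm v
          _ ≤ (C₂ / C₁) * ‖f‖ * ‖v‖ := by
              nlinarith [norm_nonneg f, norm_nonneg v,
                mul_nonneg (norm_nonneg f) (norm_nonneg v)]
    · have hrrpos : 0 < a r r := lt_of_le_of_ne (hnn r) (Ne.symm hrr)
      set t : ℝ := a r v / a r r with ht
      set v' : Vhat := v - t • r with hv'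
      have harv' : a r v' = 0 := by
        simp only [hv', map_sub, map_smul, smul_eq_mul]
        rw [ht, div_mul_cancel₀ _ hrr, sub_self]
      have hbv' : b (uh : U) ((v' : V)) = b (uh : U) (v : V) := by
        have hco : ((v' : V)) = (v : V) - t • (r : V) := by
          simp [hv']
        rw [hco, map_sub, map_smul, smul_eq_mul, hbr]
        ring
      have hsolv' := hsol v'
      have hfv' : b (uh : U) ((v' : V)) = f v' := by linarith [hsolv', harv']
      -- a v' v' ≤ a v v
      have havv' : a v' v' ≤ a v v := by
        have expand : a v' v' = a v v - (a r v)^2 / a r r := by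
          simp only [hv', map_sub, map_smul, smul_eq_mul,
            ContinuousLinearMap.coe_sub', Pi.sub_apply,
            ContinuousLinearMap.coe_smul', Pi.smul_apply]
          rw [hsymm v r]
          rw [ht]
          field_simp
          ring
        have hq : 0 ≤ (a r v)^2 / a r r := div_nonneg (sq_nonneg _) hrrpos.le
        linarith
      have hnv' : ‖v'‖ ≤ (C₂ / C₁) * ‖v‖ := by
        have h1 := (hequiv v').1
        have h2 := (hequiv v).2
        have h3 : Real.sqrt (a v' v') ≤ Real.sqrt (a v v) := Real.sqrt_le_sqrt havv'
        rw [div_mul_eq_mul_div, le_div_iff₀ hC₁]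
        nlinarith
      calc b (uh : U) (v : V) = f v' := by rw [← hbv', hfv']
        _ ≤ ‖f‖ * ‖v'‖ := le_trans (le_abs_self _) (f.le_opNorm v')
        _ ≤ ‖f‖ * ((C₂ / C₁) * ‖v‖) := mul_le_mul_of_nonneg_left hnv' (norm_nonneg f)
        _ = (C₂ / C₁) * ‖f‖ * ‖v‖ := by ring
  -- assemble
  have hRHSnn : 0 ≤ (C₂ / C₁) * ‖f‖ := mul_nonneg (div_nonneg hC₂.le hC₁.le) (norm_nonneg f)
  have hsup : (⨆ v : {v : Vhat // v ≠ 0}, b (uh : U) ((v.1 : V)) / ‖v.1‖) ≤ (C₂ / C₁) * ‖f‖ := by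
    apply Real.iSup_le _ hRHSnn
    intro v
    have hvpos : (0:ℝ) < ‖v.1‖ := norm_pos_iff.mpr v.2
    rw [div_le_iff₀ hvpos]
    exact key v.1
  have h1 := (hinfsup_b (uh : U) uh.2).trans hsup
  have h2 : ‖(uh : U)‖ ≤ (C₂ / C₁ * ‖f‖) / βh := by
    rw [le_div_iff₀ hβh]
    have : ‖(uh : U)‖ = ‖uh‖ := rfl
    nlinarith [this]
  have heq : (C₂ / C₁) * (1 / βh) * ‖f‖ = (C₂ / C₁ * ‖f‖) / βh := by ring
  rw [heq]
  exact h2
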